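/- If a finite game structure G with state set V has recurring certainty, then G has periodic certainty with an explicit bound: the bound t on the number of rounds between consecutive histories at which the grand coalition attains certainty can be taken to satisfy t ≤ 2^(|V|² + 1) + 1. -/

import Mathlib

/-- The state reached after following the word `w` (a list of (action profile, state) pairs)
starting from state `v`: the last state of `w`, or `v` if `w` is empty. -/
def endFrom {α V : Type} : V → List (α × V) → V
  | v, [] => v
  | _, p :: w => endFrom p.2 w

/-- An `n`-player game structure with imperfect information: states `V` with an initial state,
action sets `A i` for each player, a total move relation labelled by action profiles,
observation functions `obs i : V → B i` for each player, and the observation function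
`obs0 : V → B0` of the fictitious, less informed Player 0, which is a coarsening of
every player's observation. -/
structure GameStructure (n : ℕ) (V : Type) (A : Fin n → Type) (B : Fin n → Type)
    (B0 : Type) where
  init : V
  move : V → (∀ i, A i) → V → Prop
  move_total : ∀ v a, ∃ v', move v a v'
  obs : ∀ i : Fin n, V → B i
  obs0 : V → B0
  obs0_coarse : ∀ v v' : V, (∃ i, obs i v = obs i v') → obs0 v = obs0 v'

namespace GameStructure

variable {n : ℕ} {V : Type} {A : Fin n → Type} {B : Fin n → Type} {B0 : Type}

variable (G : GameStructure n V A B B0)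

/-- `G.IsHistFrom v w` holds if the word `w` describes a sequence of legal moves from `v`. -/
def IsHistFrom : V → List ((∀ i, A i) × V) → Prop
  | _, [] => True
  | v, p :: w => G.move v p.1 p.2 ∧ IsHistFrom p.2 w

/-- `w` encodes a history: a legal sequence of moves from the initial state.
The history `v₀ a₀ v₁ … a_{ℓ-1} v_ℓ` is encoded as the word `(a₀,v₁) … (a_{ℓ-1},v_ℓ)`. -/
def IsHistWord (w : List ((∀ i, A i) × V)) : Prop := G.IsHistFrom G.init w

/-- The final state of the history encoded by `w`. -/
def endState (w : List ((∀ i, A i) × V)) : V := endFrom G.init w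

/-- The sequence of Player 0's observations of the states of the history encoded by `w`
(the observation of the initial state is omitted, as it is fixed). Two histories are
`∼⁰`-indistinguishable iff their `obs0Trace`s are equal (which forces equal length). -/
def obs0Trace (w : List ((∀ i, A i) × V)) : List B0 := w.map fun p => G.obs0 p.2

/-- The grand coalition attains certainty at the history `w`: every history
`∼⁰`-indistinguishable from `w` ends at the same state. -/
def Certain (w : List ((∀ i, A i) × V)) : Prop :=
  ∀ w', G.IsHistWord w' → G.obs0Trace w' = G.obs0Trace w → G.endState w' = G.endState w

/-- A play: an infinite legal sequence of states and action profiles from the initial state. -/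
structure Play (G : GameStructure n V A B B0) where
  st : ℕ → V
  act : ℕ → ∀ i, A i
  init_eq : st 0 = G.init
  valid : ∀ k, G.move (st k) (act k) (st (k + 1))

/-- The word encoding the prefix history of length `ℓ` of the play `π`. -/
def Play.prefixWord {G : GameStructure n V A B B0} (π : G.Play) (ℓ : ℕ) :
    List ((∀ i, A i) × V) :=
  (List.range ℓ).map fun k => (π.act k, π.st (k + 1))

/-- The play `π` has recurring certainty: the grand coalition attains certainty at
infinitely many of its finite prefixes. -/
def Play.HasRecurringCertainty {G : GameStructure n V A B B0} (π : G.Play) : Prop :=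
  ∀ m : ℕ, ∃ ℓ, m ≤ ℓ ∧ G.Certain (π.prefixWord ℓ)

/-- The game structure `G` has recurring certainty: every play does. -/
def RecurringCertainty : Prop := ∀ π : G.Play, π.HasRecurringCertainty

/-- `G` has periodic certainty with bound `t`: along every play, every prefix history can be
extended by at most `t` further rounds, within the play, to a history at which the grand
coalition attains certainty. -/
def PeriodicWithBound (t : ℕ) : Prop :=
  ∀ π : G.Play, ∀ m : ℕ, ∃ ℓ, m ≤ ℓ ∧ ℓ ≤ m + t ∧ G.Certain (π.prefixWord ℓ)

/-- `G` has periodic certainty: periodic certainty with some uniform bound `t`. -/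
def PeriodicCertainty : Prop := ∃ t, G.PeriodicWithBound t

end GameStructure


section Aux

namespace GameStructure

variable {n : ℕ} {V : Type} {A : Fin n → Type} {B : Fin n → Type} {B0 : Type}

variable (G : GameStructure n V A B B0)

theorem endFrom_append {α : Type} (v : V) (w₁ w₂ : List (α × V)) :
    endFrom v (w₁ ++ w₂) = endFrom (endFrom v w₁) w₂ := by
  induction w₁ generalizing v with
  | nil => rfl
  | cons p w ih => simp [endFrom, ih]

theorem isHistFrom_append (v : V) (w₁ w₂ : List ((∀ i, A i) × V)) :
    G.IsHistFrom v (w₁ ++ w₂) ↔ G.IsHistFrom v w₁ ∧ G.IsHistFrom (endFrom v w₁) w₂ := by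
  induction w₁ generalizing v with
  | nil => simp [IsHistFrom, endFrom]
  | cons p w ih => simp [IsHistFrom, endFrom, ih, and_assoc]

/-- The knowledge set of Player 0 after observing the trace `τ`: the set of possible
end states of histories with that trace. -/
def Kset (τ : List B0) : Set V :=
  {v | ∃ w, G.IsHistWord w ∧ G.obs0Trace w = τ ∧ G.endState w = v}

theorem certain_iff (w : List ((∀ i, A i) × V)) :
    G.Certain w ↔ G.Kset (G.obs0Trace w) ⊆ {G.endState w} := by
  constructor
  · rintro hc v ⟨w', hw', ht, he⟩
    exact he ▸ hc w' hw' ht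
  · intro hsub w' hw' ht
    exact hsub ⟨w', hw', ht, rfl⟩

theorem Kset_append (τ : List B0) (b : B0) :
    G.Kset (τ ++ [b]) =
      {v' | G.obs0 v' = b ∧ ∃ v ∈ G.Kset τ, ∃ a, G.move v a v'} := by
  ext v'
  constructor
  · rintro ⟨w, hw, ht, he⟩
    have hne : w ≠ [] := by
      rintro rfl
      simp [obs0Trace] at ht
    obtain ⟨w₁, p, rfl⟩ : ∃ w₁ p, w = w₁ ++ [p] :=
      ⟨w.dropLast, w.getLast hne, (List.dropLast_append_getLast hne).symm⟩
    have ht' : G.obs0Trace w₁ ++ [G.obs0 p.2] = τ ++ [b] := by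
      simpa [obs0Trace] using ht
    have hlen : (G.obs0Trace w₁).length = τ.length := by
      have := congrArg List.length ht'
      simpa using this
    obtain ⟨ht1, ht2⟩ := List.append_inj ht' hlen
    have hb : G.obs0 p.2 = b := by simpa using ht2
    have hsplit := (G.isHistFrom_append G.init w₁ [p]).1 hw
    have hmove : G.move (G.endState w₁) p.1 p.2 := by
      have := hsplit.2
      simpa [IsHistFrom, endState] using this.1
    have hend : G.endState (w₁ ++ [p]) = p.2 := by
      simp [endState, endFrom_append, endFrom]
    refine ⟨by rw [← he, hend]; exact hb, G.endState w₁, ⟨w₁, hsplit.1, ht1, rfl⟩,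
      p.1, ?_⟩
    rw [← he, hend]
    exact hmove
  · rintro ⟨hb, v, ⟨w, hw, ht, he⟩, a, hmv⟩
    refine ⟨w ++ [(a, v')], ?_, ?_, ?_⟩
    · refine (G.isHistFrom_append G.init w [(a, v')]).2 ⟨hw, ?_⟩
      refine ⟨?_, trivial⟩
      rw [show endFrom G.init w = G.endState w from rfl, he]
      exact hmv
    · simp [obs0Trace, ht, hb]
      simpa [obs0Trace] using ht
    · simp [endState, endFrom_append, endFrom]

theorem Kset_congr_append {τ₁ τ₂ : List B0} (b : B0)
    (h : G.Kset τ₁ = G.Kset τ₂) : G.Kset (τ₁ ++ [b]) = G.Kset (τ₂ ++ [b]) := by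
  rw [Kset_append, Kset_append, h]

theorem Play.prefixWord_succ (π : G.Play) (ℓ : ℕ) :
    π.prefixWord (ℓ + 1) = π.prefixWord ℓ ++ [(π.act ℓ, π.st (ℓ + 1))] := by
  simp [Play.prefixWord, List.range_succ]

theorem Play.endState_prefixWord (π : G.Play) (ℓ : ℕ) :
    G.endState (π.prefixWord ℓ) = π.st ℓ := by
  induction ℓ with
  | zero => simp [Play.prefixWord, endState, endFrom, π.init_eq]
  | succ ℓ ih =>
    rw [Play.prefixWord_succ, endState, endFrom_append]
    rfl

theorem Play.isHistWord_prefixWord (π : G.Play) (ℓ : ℕ) :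
    G.IsHistWord (π.prefixWord ℓ) := by
  induction ℓ with
  | zero => simp [Play.prefixWord, IsHistWord, IsHistFrom]
  | succ ℓ ih =>
    rw [Play.prefixWord_succ]
    refine (G.isHistFrom_append G.init _ _).2 ⟨ih, ?_, trivial⟩
    rw [show endFrom G.init (π.prefixWord ℓ) = G.endState (π.prefixWord ℓ) from rfl,
      π.endState_prefixWord]
    exact π.valid ℓ

theorem Play.obs0Trace_prefixWord_succ (π : G.Play) (ℓ : ℕ) :
    G.obs0Trace (π.prefixWord (ℓ + 1)) =
      G.obs0Trace (π.prefixWord ℓ) ++ [G.obs0 (π.st (ℓ + 1))] := by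
  rw [Play.prefixWord_succ]
  simp [obs0Trace]

/-- The pumping lemma: if along a play the pair (state, knowledge set) repeats at
positions `k` and `k + d`, then (given recurring certainty) the grand coalition attains
certainty at some position in `[k, k + d)`. -/
theorem pump (hrec : G.RecurringCertainty) (π : G.Play) (k d : ℕ) (hd : 0 < d)
    (hst : π.st k = π.st (k + d))
    (hK : G.Kset (G.obs0Trace (π.prefixWord k)) =
      G.Kset (G.obs0Trace (π.prefixWord (k + d)))) :
    ∃ r < d, G.Certain (π.prefixWord (k + r)) := by
  classical
  -- the pumped play
  set stP : ℕ → V := fun j => if j ≤ k then π.st j else π.st (k + (j - k) % d) with hstPdef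
  set actP : ℕ → ∀ i, A i := fun j => if j < k then π.act j else π.act (k + (j - k) % d)
    with hactPdef
  have hstP : ∀ j, k ≤ j → stP j = π.st (k + (j - k) % d) := by
    intro j hj
    by_cases h' : j ≤ k
    · have : j = k := le_antisymm h' hj
      subst this
      simp [hstPdef]
    · simp [hstPdef, h']
  have hmod : ∀ j, k ≤ j → (j + 1 - k) % d = ((j - k) % d + 1) % d := by
    intro j hj
    have h1 : j + 1 - k = d * ((j - k) / d) + ((j - k) % d + 1) := by
      have := Nat.div_add_mod (j - k) d
      omega
    rw [h1, Nat.mul_add_mod]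
  have hvalid : ∀ j, G.move (stP j) (actP j) (stP (j + 1)) := by
    intro j
    by_cases hj : j < k
    · have h1 : stP j = π.st j := by simp [hstPdef, le_of_lt hj]
      have h2 : stP (j + 1) = π.st (j + 1) := by simp [hstPdef, show j + 1 ≤ k from hj]
      have h3 : actP j = π.act j := by simp [hactPdef, hj]
      rw [h1, h2, h3]
      exact π.valid j
    · push_neg at hj
      set r := (j - k) % d with hrdef
      have hr : r < d := Nat.mod_lt _ hd
      have h1 : stP j = π.st (k + r) := hstP j hj
      have h3 : actP j = π.act (k + r) := by simp [hactPdef, not_lt.2 hj, hrdef]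
      have h2 : stP (j + 1) = π.st (k + (r + 1) % d) := by
        rw [hstP (j + 1) (by omega), hmod j hj]
      rw [h1, h2, h3]
      rcases Nat.lt_or_ge (r + 1) d with h4 | h4
      · rw [Nat.mod_eq_of_lt h4, show k + (r + 1) = (k + r) + 1 by omega]
        exact π.valid (k + r)
      · have h5 : r + 1 = d := by omega
        have h6 : (r + 1) % d = 0 := by rw [h5, Nat.mod_self]
        rw [h6]
        have h7 : π.st (k + 0) = π.st ((k + r) + 1) := by
          rw [Nat.add_zero, hst, show k + d = (k + r) + 1 by omega]
        rw [h7]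
        exact π.valid (k + r)
  set π' : G.Play := ⟨stP, actP, by simp [hstPdef, π.init_eq], hvalid⟩ with hπ'def
  have hpre : ∀ j, j ≤ k → π'.prefixWord j = π.prefixWord j := by
    intro j hj
    unfold Play.prefixWord
    refine List.map_congr_left ?_
    intro i hi
    rw [List.mem_range] at hi
    have h1 : actP i = π.act i := by simp [hactPdef, show i < k by omega]
    have h2 : stP (i + 1) = π.st (i + 1) := by simp [hstPdef, show i + 1 ≤ k by omega]
    simp only [hπ'def]
    rw [h1, h2]
  have hKinv : ∀ j, k ≤ j →
      G.Kset (G.obs0Trace (π'.prefixWord j)) =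
        G.Kset (G.obs0Trace (π.prefixWord (k + (j - k) % d))) := by
    intro j hj
    induction j, hj using Nat.le_induction with
    | base => rw [hpre k le_rfl]; simp
    | succ j hj ih =>
      set r := (j - k) % d with hrdef
      have hr : r < d := Nat.mod_lt _ hd
      have hδ : π'.st (j + 1) = π.st (k + (r + 1) % d) := by
        show stP (j + 1) = _
        rw [hstP (j + 1) (by omega), hmod j hj]
      rw [π'.obs0Trace_prefixWord_succ, hδ, hmod j hj, ← hrdef]
      rcases Nat.lt_or_ge (r + 1) d with h4 | h4
      · rw [Nat.mod_eq_of_lt h4]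
        rw [show k + (r + 1) = (k + r) + 1 by omega, π.obs0Trace_prefixWord_succ]
        exact G.Kset_congr_append _ ih
      · have h5 : r + 1 = d := by omega
        have h6 : (r + 1) % d = 0 := by rw [h5, Nat.mod_self]
        rw [h6, Nat.add_zero]
        have h7 : π.st (k + 0) = π.st ((k + r) + 1) := by
          rw [Nat.add_zero, hst, show k + d = (k + r) + 1 by omega]
        calc G.Kset (G.obs0Trace (π'.prefixWord j) ++ [G.obs0 (π.st (k + 0))])
            = G.Kset (G.obs0Trace (π.prefixWord (k + r)) ++ [G.obs0 (π.st ((k + r) + 1))]) := by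
              rw [← h7]; exact G.Kset_congr_append _ ih
          _ = G.Kset (G.obs0Trace (π.prefixWord ((k + r) + 1))) := by
              rw [π.obs0Trace_prefixWord_succ]
          _ = G.Kset (G.obs0Trace (π.prefixWord (k + d))) := by
              rw [show (k + r) + 1 = k + d by omega]
          _ = G.Kset (G.obs0Trace (π.prefixWord k)) := hK.symm
  obtain ⟨ℓ, hℓ, hc⟩ := hrec π' k
  set r := (ℓ - k) % d with hrdef
  have hr : r < d := Nat.mod_lt _ hd
  refine ⟨r, hr, ?_⟩
  rw [G.certain_iff] at hc ⊢
  rw [π.endState_prefixWord]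
  rw [π'.endState_prefixWord] at hc
  have hstℓ : π'.st ℓ = π.st (k + r) := by
    show stP ℓ = _
    rw [hstP ℓ hℓ, ← hrdef]
  rw [hstℓ, hKinv ℓ hℓ, ← hrdef] at hc
  exact hc

end GameStructure

end Aux

/-- Explicit bound for periodic certainty: if a finite game structure has recurring certainty,
then it has periodic certainty with a bound `t ≤ 2 ^ (|V|² + 1) + 1`. -/
theorem periodicCertainty_bound_of_recurringCertainty
    {n : ℕ} {V : Type} {A : Fin n → Type} {B : Fin n → Type} {B0 : Type}
    (hn : 1 ≤ n) [Fintype V] [∀ i, Fintype (A i)] [∀ i, Nonempty (A i)]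
    [∀ i, Fintype (B i)] [Fintype B0]
    (G : GameStructure n V A B B0)
    (h : G.RecurringCertainty) :
    ∃ t : ℕ, t ≤ 2 ^ (Fintype.card V ^ 2 + 1) + 1 ∧ G.PeriodicWithBound t := by
  classical
  set c := Fintype.card V with hc
  refine ⟨2 ^ (c ^ 2 + 1) + 1, le_refl _, ?_⟩
  intro π m
  set t := 2 ^ (c ^ 2 + 1) + 1 with ht
  haveI : Nonempty V := ⟨G.init⟩
  have hc1 : 1 ≤ c := Fintype.card_pos
  -- pigeonhole on (state, knowledge set) pairs
  set F : Fin (t + 1) → V × (V → Prop) := fun i =>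
    (π.st (m + i), fun v => v ∈ G.Kset (G.obs0Trace (π.prefixWord (m + i)))) with hF
  have hcard : Fintype.card (V × (V → Prop)) < Fintype.card (Fin (t + 1)) := by
    rw [Fintype.card_fin, Fintype.card_prod, Fintype.card_fun]
    have h1 : Fintype.card Prop = 2 := rfl
    rw [h1, ← hc]
    have h2 : c * 2 ^ c ≤ 2 ^ c * 2 ^ c :=
      Nat.mul_le_mul_right _ Nat.lt_two_pow_self.le
    have h3 : (2 : ℕ) ^ c * 2 ^ c = 2 ^ (c + c) := by rw [pow_add]
    have h4 : c + c ≤ c ^ 2 + 1 := by nlinarith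
    have h5 : (2 : ℕ) ^ (c + c) ≤ 2 ^ (c ^ 2 + 1) := Nat.pow_le_pow_right (by norm_num) h4
    omega
  obtain ⟨i, j, hij, hfij⟩ := Fintype.exists_ne_map_eq_of_card_lt F hcard
  have hvij : (i : ℕ) ≠ (j : ℕ) := fun h' => hij (Fin.ext h')
  -- arrange i < j
  obtain ⟨i, j, hlt, hfij⟩ : ∃ i j : Fin (t + 1), (i : ℕ) < (j : ℕ) ∧ F i = F j := by
    rcases hvij.lt_or_gt with h' | h'
    · exact ⟨i, j, h', hfij⟩
    · exact ⟨j, i, h', hfij.symm⟩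
  set k := m + (i : ℕ) with hk
  set d := (j : ℕ) - (i : ℕ) with hd
  have hd0 : 0 < d := by omega
  have hkd : k + d = m + (j : ℕ) := by omega
  have hst : π.st k = π.st (k + d) := by
    have := congrArg Prod.fst hfij
    simpa [hF, hkd] using this
  have hKeq : G.Kset (G.obs0Trace (π.prefixWord k)) =
      G.Kset (G.obs0Trace (π.prefixWord (k + d))) := by
    have h2 := congrArg Prod.snd hfij
    simp only [hF] at h2
    rw [hkd]
    ext v
    exact iff_of_eq (congrFun h2 v)
  obtain ⟨r, hr, hcert⟩ := G.pump h π k d hd0 hst hKeq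
  have hjt : (j : ℕ) < t + 1 := j.isLt
  exact ⟨k + r, by omega, by omega, hcert⟩
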